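/- Let f : X → X' be a morphism of bornological coarse spaces and let U, U' be coarse entourages of X, X' respectively with (f × f)(U) ⊆ U'. Then the push-forward of measures f_* : P_U(X) → P_{U'}(X'), μ ↦ f_*μ, is well defined (it sends finitely supported U-bounded probability measures to finitely supported U'-bounded probability measures) and is a morphism of uniform bornological coarse spaces: it is uniformly continuous, controlled, and proper with respect to the structures induced by the spherical path metrics and the bornologies generated by the subcomplexes P_U(B), respectively P_{U'}(B'). -/

import Mathlib

open scoped ENNReal

/-- The faces of the Rips complex `P_U(X)`: nonempty finite `U`-bounded subsets of `X`. -/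
def ripsFaces {X : Type*} (U : Set (X × X)) : Set (Finset X) :=
  {s | s.Nonempty ∧ ∀ x ∈ s, ∀ y ∈ s, (x, y) ∈ U}

/-- A point of the realization of the simplicial complex `K`. -/
structure SPoint {V : Type*} (K : Set (Finset V)) where
  f : V →₀ ℝ
  nonneg : ∀ v, 0 ≤ f v
  sum_one : (f.support.sum fun v => f v) = 1
  mem : f.support ∈ K

noncomputable def sphDist {V : Type*} [DecidableEq V] {K : Set (Finset V)}
    (x y : SPoint K) : ℝ :=
  Real.arccos ((x.f.support ∪ y.f.support).sum fun v => Real.sqrt (x.f v) * Real.sqrt (y.f v))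

/-- The spherical path quasi-metric on the realization of `K`. -/
noncomputable def pathDist {V : Type*} [DecidableEq V] {K : Set (Finset V)}
    (x y : SPoint K) : ℝ≥0∞ :=
  sInf { L | ∃ (k : ℕ) (c : ℕ → SPoint K), c 0 = x ∧ c k = y ∧
    (∀ i < k, ((c i).f.support ∪ (c (i + 1)).f.support) ∈ K) ∧
    L = ∑ i ∈ Finset.range k, ENNReal.ofReal (sphDist (c i) (c (i + 1))) }

section Aux

variable {X X' : Type*} [DecidableEq X] [DecidableEq X'] {f : X → X'}

lemma mapDomain_apply_eq (v : X →₀ ℝ) (y : X') :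
    Finsupp.mapDomain f v y = ∑ a ∈ v.support, if f a = y then v a else 0 := by
  classical
  rw [Finsupp.mapDomain, Finsupp.sum_apply]
  simp [Finsupp.sum, Finsupp.single_apply]

lemma mapDomain_nonneg (v : X →₀ ℝ) (hv : ∀ x, 0 ≤ v x) (y : X') :
    0 ≤ Finsupp.mapDomain f v y := by
  rw [mapDomain_apply_eq]
  exact Finset.sum_nonneg fun a _ => by split <;> simp [hv a]

lemma support_mapDomain_eq (v : X →₀ ℝ) (hv : ∀ x, 0 ≤ v x) :
    (Finsupp.mapDomain f v).support = v.support.image f := by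
  apply Finset.Subset.antisymm Finsupp.mapDomain_support
  intro y hy
  rcases Finset.mem_image.mp hy with ⟨a, ha, rfl⟩
  rw [Finsupp.mem_support_iff]
  have h1 : v a ≤ Finsupp.mapDomain f v (f a) := by
    rw [mapDomain_apply_eq]
    have := Finset.single_le_sum (f := fun a' => if f a' = f a then v a' else 0)
      (fun a' _ => by by_cases h : f a' = f a <;> simp [h, hv a']) ha
    simpa using this
  have h2 : 0 < v a := lt_of_le_of_ne (hv a) (Ne.symm (Finsupp.mem_support_iff.mp ha))
  exact ne_of_gt (lt_of_lt_of_le h2 h1)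

lemma fiber_sum_eq (v : X →₀ ℝ) (S : Finset X) (hS : v.support ⊆ S) (y : X') :
    ∑ x ∈ S.filter (fun x => f x = y), v x = Finsupp.mapDomain f v y := by
  rw [mapDomain_apply_eq, ← Finset.sum_filter]
  refine (Finset.sum_subset (Finset.filter_subset_filter _ hS) ?_).symm
  intro x hx hx'
  by_contra h
  exact hx' (Finset.mem_filter.mpr ⟨Finsupp.mem_support_iff.mpr h,
    (Finset.mem_filter.mp hx).2⟩)

lemma inner_mono (μ ν : X →₀ ℝ) (hμ : ∀ x, 0 ≤ μ x) (hν : ∀ x, 0 ≤ ν x) :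
    ((μ.support ∪ ν.support).sum fun x => Real.sqrt (μ x) * Real.sqrt (ν x)) ≤
    (((Finsupp.mapDomain f μ).support ∪ (Finsupp.mapDomain f ν).support).sum
      fun y => Real.sqrt (Finsupp.mapDomain f μ y) * Real.sqrt (Finsupp.mapDomain f ν y)) := by
  classical
  set S := μ.support ∪ ν.support with hS
  have himg : (Finsupp.mapDomain f μ).support ∪ (Finsupp.mapDomain f ν).support
      = S.image f := by
    rw [support_mapDomain_eq μ hμ, support_mapDomain_eq ν hν, Finset.image_union]
  rw [himg]
  have key : (S.sum fun x => Real.sqrt (μ x) * Real.sqrt (ν x))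
      = ∑ y ∈ S.image f, ∑ x ∈ S.filter (fun x => f x = y),
          Real.sqrt (μ x) * Real.sqrt (ν x) :=
    (Finset.sum_image' (f := fun y => ∑ x ∈ S.filter (fun x => f x = y),
      Real.sqrt (μ x) * Real.sqrt (ν x)) _ (fun c _ => rfl)).symm
  rw [key]
  refine Finset.sum_le_sum fun y _ => ?_
  have hcs := Real.sum_mul_le_sqrt_mul_sqrt (S.filter (fun x => f x = y))
    (fun x => Real.sqrt (μ x)) (fun x => Real.sqrt (ν x))
  have hμ2 : ∀ x, Real.sqrt (μ x) ^ 2 = μ x := fun x => Real.sq_sqrt (hμ x)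
  have hν2 : ∀ x, Real.sqrt (ν x) ^ 2 = ν x := fun x => Real.sq_sqrt (hν x)
  simp only [hμ2, hν2] at hcs
  rw [fiber_sum_eq μ S Finset.subset_union_left y,
    fiber_sum_eq ν S Finset.subset_union_right y] at hcs
  exact hcs

lemma inner_nonneg (μ ν : X →₀ ℝ) (hμ : ∀ x, 0 ≤ μ x) (hν : ∀ x, 0 ≤ ν x) :
    0 ≤ (μ.support ∪ ν.support).sum fun x => Real.sqrt (μ x) * Real.sqrt (ν x) :=
  Finset.sum_nonneg fun x _ => mul_nonneg (Real.sqrt_nonneg _) (Real.sqrt_nonneg _)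

lemma arccos_anti {a b : ℝ} (h : a ≤ b) : Real.arccos b ≤ Real.arccos a := by
  rw [Real.arccos_eq_pi_div_two_sub_arcsin, Real.arccos_eq_pi_div_two_sub_arcsin]
  linarith [Real.monotone_arcsin h]

end Aux

/-- Functoriality of the Rips complex: for a morphism `f : X → X'` of bornological coarse
spaces with `(f × f)(U) ⊆ U'`, the push-forward of measures is a well-defined morphism of
uniform bornological coarse spaces `P_U(X) → P_{U'}(X')`: it is uniformly continuous,
controlled, and proper. -/
theorem stmt11 {X X' : Type*} [DecidableEq X] [DecidableEq X']
    (BX : Set (Set X)) (BX' : Set (Set X'))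
    (CX : Set (Set (X × X))) (CX' : Set (Set (X' × X')))
    (f : X → X')
    (hfc : ∀ W ∈ CX, (fun p : X × X => (f p.1, f p.2)) '' W ∈ CX')
    (hfp : ∀ B' ∈ BX', f ⁻¹' B' ∈ BX)
    (U : Set (X × X)) (hU : U ∈ CX) (U' : Set (X' × X')) (hU' : U' ∈ CX')
    (hdiag : Set.diagonal X ⊆ U) (hdiag' : Set.diagonal X' ⊆ U')
    (hUU' : ∀ p ∈ U, (f p.1, f p.2) ∈ U') :
    ∃ F : SPoint (ripsFaces U) → SPoint (ripsFaces U'),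
      (∀ μ : SPoint (ripsFaces U), (F μ).f = Finsupp.mapDomain f μ.f) ∧
      (∀ ε : ℝ, 0 < ε → ∃ δ : ℝ, 0 < δ ∧ ∀ μ ν : SPoint (ripsFaces U),
        pathDist μ ν ≤ ENNReal.ofReal δ → pathDist (F μ) (F ν) ≤ ENNReal.ofReal ε) ∧
      (∀ r : ℝ, ∃ r' : ℝ, ∀ μ ν : SPoint (ripsFaces U),
        pathDist μ ν ≤ ENNReal.ofReal r → pathDist (F μ) (F ν) ≤ ENNReal.ofReal r') ∧
      (∀ B' ∈ BX', ∃ B ∈ BX, ∀ μ : SPoint (ripsFaces U),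
        (↑(F μ).f.support : Set X') ⊆ B' → (↑μ.f.support : Set X) ⊆ B) := by
  classical
  -- image of a face is a face
  have hface : ∀ s : Finset X, s ∈ ripsFaces U → s.image f ∈ ripsFaces U' := by
    rintro s ⟨hne, hpair⟩
    refine ⟨hne.image f, ?_⟩
    rintro x hx y hy
    rcases Finset.mem_image.mp hx with ⟨a, ha, rfl⟩
    rcases Finset.mem_image.mp hy with ⟨b, hb, rfl⟩
    exact hUU' (a, b) (hpair a ha b hb)
  -- the pushforward map
  have hFdef : ∀ μ : SPoint (ripsFaces U), ∃ ν : SPoint (ripsFaces U'),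
      ν.f = Finsupp.mapDomain f μ.f := by
    intro μ
    refine ⟨⟨Finsupp.mapDomain f μ.f, mapDomain_nonneg μ.f μ.nonneg, ?_, ?_⟩, rfl⟩
    · have h := Finsupp.sum_mapDomain_index (f := f) (s := μ.f)
        (h := fun _ (x : ℝ) => x) (fun _ => rfl) (fun _ _ _ => rfl)
      simpa [Finsupp.sum, μ.sum_one] using h
    · rw [support_mapDomain_eq μ.f μ.nonneg]
      exact hface _ μ.mem
  choose F hF using hFdef
  -- sphDist decreases
  have hsph : ∀ μ ν : SPoint (ripsFaces U), sphDist (F μ) (F ν) ≤ sphDist μ ν := by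
    intro μ ν
    unfold sphDist
    rw [hF μ, hF ν]
    exact arccos_anti (inner_mono μ.f ν.f μ.nonneg ν.nonneg)
  -- pathDist decreases
  have hpath : ∀ μ ν : SPoint (ripsFaces U), pathDist (F μ) (F ν) ≤ pathDist μ ν := by
    intro μ ν
    apply sInf_le_sInf_of_isCoinitialFor
    rintro L ⟨k, c, hc0, hck, hcf, rfl⟩
    refine ⟨∑ i ∈ Finset.range k, ENNReal.ofReal (sphDist (F (c i)) (F (c (i + 1)))),
      ⟨k, fun i => F (c i), congrArg F hc0, congrArg F hck, ?_, rfl⟩, ?_⟩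
    · intro i hi
      have := hface _ (hcf i hi)
      rwa [Finset.image_union, ← support_mapDomain_eq (c i).f (c i).nonneg,
        ← support_mapDomain_eq (c (i + 1)).f (c (i + 1)).nonneg,
        ← hF (c i), ← hF (c (i + 1))] at this
    · exact Finset.sum_le_sum fun i _ => ENNReal.ofReal_le_ofReal (hsph _ _)
  refine ⟨F, hF, ?_, ?_, ?_⟩
  · exact fun ε hε => ⟨ε, hε, fun μ ν h => le_trans (hpath μ ν) h⟩
  · exact fun r => ⟨r, fun μ ν h => le_trans (hpath μ ν) h⟩
  · intro B' hB'
    refine ⟨f ⁻¹' B', hfp B' hB', fun μ hsub x hx => ?_⟩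
    have : f x ∈ (F μ).f.support := by
      rw [hF μ, support_mapDomain_eq μ.f μ.nonneg]
      exact Finset.mem_image_of_mem f hx
    exact hsub this
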